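/- Let G be a finite group and N a normal subgroup of G such that G/N satisfies the Amit–Ashurst conjecture. Let w be a word in k variables and let g ∈ G_w be such that N_{w,G}(gn) = N_{w,G}(g) for all n ∈ N. Then N_{w,G}(g) ≥ |G|^{k−1}. -/

import Mathlib

/-- A finite group `G` satisfies the Amit–Ashurst conjecture if
`P_{w,G}(g) ≥ 1/|G|` for every word `w` in any number of variables and every
`g` in the image of the word map. -/
def AmitAshurst (G : Type*) [Group G] : Prop :=
  ∀ (k : ℕ) (w : FreeGroup (Fin k)) (g : G),
    (∃ v : Fin k → G, (FreeGroup.lift v) w = g) →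
    (Nat.card {v : Fin k → G // (FreeGroup.lift v) w = g} : ℝ) / (Nat.card G : ℝ) ^ k
      ≥ 1 / (Nat.card G : ℝ)

section Aux

variable {G : Type*} [Group G] [Finite G] (N : Subgroup G) [N.Normal]

/-- The fiber of the quotient map over any point has the cardinality of `N`. -/
lemma aux_fiber_card (q : G ⧸ N) :
    Nat.card {x : G // (QuotientGroup.mk' N) x = q} = Nat.card N := by
  induction q using QuotientGroup.induction_on with
  | H y =>
    refine Nat.card_congr ?_
    refine ⟨fun x => ⟨y⁻¹ * x.1, ?_⟩, fun n => ⟨y * n.1, ?_⟩, ?_, ?_⟩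
    · have := x.2
      simp only [QuotientGroup.mk'_apply] at this
      exact QuotientGroup.eq.mp this.symm
    · simp only [QuotientGroup.mk'_apply]
      exact (QuotientGroup.eq.mpr (by simpa using n.2)).symm
    · intro x; ext; simp
    · intro n; ext; simp

end Aux

/-- If `N ⊴ G` is such that `G/N` satisfies the Amit–Ashurst
conjecture, `w` is a word in `k` variables and `g ∈ G_w` is such that
`N_{w,G}(gn) = N_{w,G}(g)` for all `n ∈ N`, then `N_{w,G}(g) ≥ |G|^(k-1)`. -/
theorem Nw_ge_of_quotient_amitAshurst
    {G : Type*} [Group G] [Finite G] (N : Subgroup G) [N.Normal]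
    (hAA : AmitAshurst (G ⧸ N))
    (k : ℕ) (w : FreeGroup (Fin k)) (g : G)
    (hg : ∃ v : Fin k → G, (FreeGroup.lift v) w = g)
    (hfib : ∀ n ∈ N,
      Nat.card {v : Fin k → G // (FreeGroup.lift v) w = g * n}
        = Nat.card {v : Fin k → G // (FreeGroup.lift v) w = g}) :
    Nat.card {v : Fin k → G // (FreeGroup.lift v) w = g} ≥ Nat.card G ^ (k - 1) := by
  classical
  obtain ⟨v0, hv0⟩ := hg
  letI : Fintype G := Fintype.ofFinite G
  have hApos : 0 < Nat.card {v : Fin k → G // (FreeGroup.lift v) w = g} := by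
    have : Nonempty {v : Fin k → G // (FreeGroup.lift v) w = g} := ⟨⟨v0, hv0⟩⟩
    exact Nat.card_pos
  rcases Nat.eq_zero_or_pos k with hk | hk
  · subst hk; simpa using (Nat.succ_le_of_lt hApos : 1 ≤ _)
  set π : G →* G ⧸ N := QuotientGroup.mk' N with hπ
  have key : ∀ v : Fin k → G, (FreeGroup.lift ((π : G → G ⧸ N) ∘ v)) w
      = π ((FreeGroup.lift v) w) := fun v =>
    (FreeGroup.lift_unique (π.comp (FreeGroup.lift v)) (fun x => by simp)).symm
  set A := Nat.card {v : Fin k → G // (FreeGroup.lift v) w = g} with hA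
  set NQ := Nat.card {u : Fin k → G ⧸ N // (FreeGroup.lift u) w = π g} with hNQ
  set nN := Nat.card N with hnN
  set nQ := Nat.card (G ⧸ N) with hnQ
  -- Claim 1 : Nat.card S = nN * A
  have claim1 : Nat.card {v : Fin k → G // π ((FreeGroup.lift v) w) = π g} = nN * A := by
    have e1 : {v : Fin k → G // π ((FreeGroup.lift v) w) = π g}
        ≃ Σ n : N, {v : Fin k → G // (FreeGroup.lift v) w = g * n.1} := by
      refine ⟨fun v => ⟨⟨g⁻¹ * (FreeGroup.lift v.1) w, ?_⟩, ⟨v.1, by group⟩⟩,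
        fun p => ⟨p.2.1, ?_⟩, ?_, ?_⟩
      · have := v.2
        simp only [hπ, QuotientGroup.mk'_apply] at this
        exact QuotientGroup.eq.mp this.symm
      · have := p.2.2
        simp [hπ, this, QuotientGroup.mk'_apply]
      · intro v; rfl
      · intro p
        refine Sigma.subtype_ext ?_ rfl
        ext; simp [p.2.2]
    rw [Nat.card_congr e1, Nat.card_eq_fintype_card, Fintype.card_sigma]
    have : ∀ n : N, Fintype.card {v : Fin k → G // (FreeGroup.lift v) w = g * n.1} = A := by
      intro n
      rw [← Nat.card_eq_fintype_card]
      exact hfib n.1 n.2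
    simp only [this, Finset.sum_const, Finset.card_univ, smul_eq_mul]
    rw [← Nat.card_eq_fintype_card]
  -- Claim 2 : Nat.card S = NQ * nN ^ k
  have claim2 : Nat.card {v : Fin k → G // π ((FreeGroup.lift v) w) = π g}
      = NQ * nN ^ k := by
    have e2 : {v : Fin k → G // π ((FreeGroup.lift v) w) = π g}
        ≃ Σ u : {u : Fin k → G ⧸ N // (FreeGroup.lift u) w = π g},
            {v : Fin k → G // (π : G → G ⧸ N) ∘ v = u.1} := by
      refine ⟨fun v => ⟨⟨(π : G → G ⧸ N) ∘ v.1, by rw [key]; exact v.2⟩, ⟨v.1, rfl⟩⟩,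
        fun p => ⟨p.2.1, ?_⟩, fun v => rfl, fun p => ?_⟩
      · rw [← key, p.2.2]; exact p.1.2
      · exact Sigma.subtype_ext (Subtype.ext p.2.2) rfl
    rw [Nat.card_congr e2, Nat.card_eq_fintype_card, Fintype.card_sigma]
    have hfib' : ∀ u : {u : Fin k → G ⧸ N // (FreeGroup.lift u) w = π g},
        Fintype.card {v : Fin k → G // (π : G → G ⧸ N) ∘ v = u.1} = nN ^ k := by
      intro u
      rw [← Nat.card_eq_fintype_card]
      have e3 : {v : Fin k → G // (π : G → G ⧸ N) ∘ v = u.1}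
          ≃ ∀ i : Fin k, {x : G // π x = u.1 i} := by
        refine (Equiv.subtypeEquivRight ?_).trans (Equiv.subtypePiEquivPi)
        intro v; exact funext_iff
      rw [Nat.card_congr e3, Nat.card_pi]
      simp only [hπ, aux_fiber_card N]
      simp [hnN, Finset.prod_const, Nat.card_eq_fintype_card]
    simp only [hfib', Finset.sum_const, Finset.card_univ, smul_eq_mul]
    rw [← Nat.card_eq_fintype_card]
  -- Claim 3 : NQ ≥ nQ ^ (k-1)
  have hQpos : 0 < nQ := Nat.card_pos
  have claim3 : nQ ^ (k - 1) ≤ NQ := by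
    have h := hAA k w (π g) ⟨(π : G → G ⧸ N) ∘ v0, by rw [key, hv0]⟩
    have hq : (0 : ℝ) < (nQ : ℝ) := by exact_mod_cast hQpos
    have hqk : (0 : ℝ) < (nQ : ℝ) ^ k := by positivity
    rw [ge_iff_le, div_le_div_iff₀ hq hqk] at h
    have hcast : ((nQ : ℝ)) ^ (k - 1) ≤ (NQ : ℝ) := by
      have hk1 : k - 1 + 1 = k := Nat.succ_pred_eq_of_pos hk
      calc ((nQ : ℝ)) ^ (k - 1) = (nQ : ℝ) ^ k / nQ := by
            rw [← hk1, pow_succ]; field_simp; rw [Nat.add_sub_cancel]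
        _ ≤ (NQ : ℝ) := by
            rw [div_le_iff₀ hq]
            linarith [h]
    exact_mod_cast hcast
  -- Combine
  have hNpos : 0 < nN := Nat.card_pos
  have hk1 : k - 1 + 1 = k := Nat.succ_pred_eq_of_pos hk
  have hpow : nN ^ k = nN ^ (k - 1) * nN := by rw [← pow_succ, hk1]
  have heq : nN * A = NQ * nN ^ (k - 1) * nN := by
    rw [← claim1, claim2, hpow]; ring
  have hAeq : A = NQ * nN ^ (k - 1) := by
    have := heq
    rw [mul_comm nN A] at this
    exact Nat.eq_of_mul_eq_mul_right hNpos this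
  calc Nat.card G ^ (k - 1) = (nQ * nN) ^ (k - 1) := by
        rw [hnQ, hnN, ← Subgroup.card_eq_card_quotient_mul_card_subgroup]
    _ = nQ ^ (k - 1) * nN ^ (k - 1) := mul_pow _ _ _
    _ ≤ NQ * nN ^ (k - 1) := Nat.mul_le_mul_right _ claim3
    _ = A := hAeq.symm
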